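/- Let Q ⊆ ℝ^m be a closed convex cone containing no straight line, L : ℝ^m → ℝ^k a linear map, and suppose L(Q) is a closed cone containing no straight line. Then for every extreme ray V of L(Q) there exists an extreme ray W of Q with L(W) = V. -/

import Mathlib

open scoped RealInnerProductSpace

/-- `v` is a direction vector of an extreme ray of the cone `C`:
`v ≠ 0`, `v ∈ C`, and whenever a point of the ray `{λv : λ ≥ 0}` is the
midpoint of two elements of `C`, both elements lie on the ray. -/
def IsExtremeRayDir {E : Type*} [AddCommGroup E] [Module ℝ E]
    (C : Set E) (v : E) : Prop :=
  v ≠ 0 ∧ v ∈ C ∧ ∀ lam : ℝ, 0 ≤ lam → ∀ x ∈ C, ∀ y ∈ C,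
    lam • v = (1 / 2 : ℝ) • (x + y) →
    (∃ a : ℝ, 0 ≤ a ∧ x = a • v) ∧ (∃ b : ℝ, 0 ≤ b ∧ y = b • v)

lemma aux_pos_functional {n : ℕ} (F : Set (EuclideanSpace ℝ (Fin n)))
    (hclosed : IsClosed F) (hconv : Convex ℝ F)
    (hcone : ∀ c : ℝ, 0 ≤ c → ∀ x ∈ F, c • x ∈ F)
    (hsal : ∀ x ∈ F, x ≠ 0 → -x ∉ F) (hne : F.Nonempty) :
    ∃ y : EuclideanSpace ℝ (Fin n), ∃ c : ℝ, 0 < c ∧ ∀ x ∈ F, c * ‖x‖ ≤ ⟪x, y⟫ := by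
  classical
  set Fc : ConvexCone ℝ (EuclideanSpace ℝ (Fin n)) :=
    { carrier := F
      smul_mem' := fun {c} hc {x} hx => hcone c hc.le x hx
      add_mem' := fun {x} hx {y} hy => by
        have hmid : (1/2 : ℝ) • x + (1/2 : ℝ) • y ∈ F :=
          hconv hx hy (by norm_num) (by norm_num) (by norm_num)
        have h2 := hcone 2 (by norm_num) _ hmid
        have : (2:ℝ) • ((1/2 : ℝ) • x + (1/2 : ℝ) • y) = x + y := by
          rw [smul_add, smul_smul, smul_smul]; norm_num
        rwa [this] at h2 } with hFc
  have hcoe : (Fc : Set (EuclideanSpace ℝ (Fin n))) = F := rfl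
  have hdd : ∀ e : EuclideanSpace ℝ (Fin n),
      e ∈ ProperCone.innerDual (ProperCone.innerDual F : Set (EuclideanSpace ℝ (Fin n))) → e ∈ F := by
    obtain ⟨x0, hx0⟩ := hne
    have h0 : (0 : EuclideanSpace ℝ (Fin n)) ∈ F := by simpa using hcone 0 le_rfl x0 hx0
    let C : ProperCone ℝ (EuclideanSpace ℝ (Fin n)) :=
      { carrier := F
        add_mem' := fun hx hy => Fc.add_mem hx hy
        zero_mem' := h0
        smul_mem' := fun c x hx => hcone c c.2 x hx
        isClosed' := hclosed }
    intro e he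
    have := ProperCone.innerDual_innerDual C
    have hC : (C : Set (EuclideanSpace ℝ (Fin n))) = F := rfl
    rw [hC] at this; rw [this] at he; exact he
  -- the dual cone spans
  have hspan : Submodule.span ℝ ((ProperCone.innerDual F : Set (EuclideanSpace ℝ (Fin n)))) = ⊤ := by
    by_contra hne'
    have hbot : (Submodule.span ℝ ((ProperCone.innerDual F : Set (EuclideanSpace ℝ (Fin n)))))ᗮ ≠ ⊥ := by
      intro h
      exact hne' (Submodule.orthogonal_eq_bot_iff.mp h)
    obtain ⟨d, hd, hd0⟩ := (Submodule.ne_bot_iff _).mp hbot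
    have hdmem : ∀ u ∈ (ProperCone.innerDual F : Set (EuclideanSpace ℝ (Fin n))), ⟪u, d⟫ = 0 := by
      intro u hu
      exact (Submodule.mem_orthogonal _ d).mp hd u (Submodule.subset_span hu)
    have hmemF : ∀ e : EuclideanSpace ℝ (Fin n), (∀ u ∈ (ProperCone.innerDual F : Set (EuclideanSpace ℝ (Fin n))), (0:ℝ) ≤ ⟪u, e⟫) → e ∈ F := by
      intro e he
      exact hdd e (fun u hu => he u hu)
    have hdF : d ∈ F := hmemF d (fun u hu => le_of_eq (hdmem u hu).symm)
    have hndF : -d ∈ F := by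
      refine hmemF (-d) (fun u hu => ?_)
      rw [inner_neg_right, hdmem u hu, neg_zero]
    exact hsal d hdF hd0 hndF
  -- affine span is top
  have h0K : (0 : EuclideanSpace ℝ (Fin n)) ∈ (ProperCone.innerDual F : Set (EuclideanSpace ℝ (Fin n))) :=
    (ProperCone.innerDual F).zero_mem
  have haff : affineSpan ℝ (ProperCone.innerDual F : Set (EuclideanSpace ℝ (Fin n))) = ⊤ := by
    have h1 : insert (0 : EuclideanSpace ℝ (Fin n)) (ProperCone.innerDual F : Set (EuclideanSpace ℝ (Fin n))) = (ProperCone.innerDual F : Set (EuclideanSpace ℝ (Fin n))) := Set.insert_eq_self.mpr h0K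
    have h2 := affineSpan_insert_zero (k := ℝ) (ProperCone.innerDual F : Set (EuclideanSpace ℝ (Fin n)))
    rw [h1, hspan] at h2
    rw [← AffineSubspace.coe_eq_univ_iff, h2]
    simp
  -- interior point
  have hKconv : Convex ℝ (ProperCone.innerDual F : Set (EuclideanSpace ℝ (Fin n))) := (ProperCone.innerDual F).convex
  obtain ⟨y, hy⟩ := hKconv.interior_nonempty_iff_affineSpan_eq_top.mpr haff
  obtain ⟨eps, heps, hball⟩ := Metric.isOpen_iff.mp isOpen_interior y hy
  refine ⟨y, eps/2, by positivity, ?_⟩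
  intro x hx
  rcases eq_or_ne x 0 with rfl | hx0
  · simp
  · have hxn : (0:ℝ) < ‖x‖ := norm_pos_iff.mpr hx0
    set z := y - (eps / (2 * ‖x‖)) • x with hz
    have hzK : z ∈ (ProperCone.innerDual F : Set (EuclideanSpace ℝ (Fin n))) := by
      apply interior_subset
      apply hball
      rw [Metric.mem_ball, dist_eq_norm, hz]
      have : y - (eps / (2 * ‖x‖)) • x - y = -((eps / (2 * ‖x‖)) • x) := by abel
      rw [this, norm_neg, norm_smul, Real.norm_eq_abs, abs_of_pos (by positivity)]
      have heq2 : eps / (2 * ‖x‖) * ‖x‖ = eps / 2 := by field_simp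
      rw [heq2]; linarith
    have hinner : (0:ℝ) ≤ ⟪x, z⟫ := ProperCone.mem_innerDual.mp hzK hx
    rw [hz, inner_sub_right, real_inner_smul_right, real_inner_self_eq_norm_sq] at hinner
    have hq : eps / (2 * ‖x‖) * ‖x‖ ^ 2 = eps / 2 * ‖x‖ := by
      field_simp
    nlinarith [hinner]

lemma aux_pos_functional' {n : ℕ} (F : Set (Fin n → ℝ))
    (hclosed : IsClosed F) (hconv : Convex ℝ F)
    (hcone : ∀ c : ℝ, 0 ≤ c → ∀ x ∈ F, c • x ∈ F)
    (hsal : ∀ x ∈ F, x ≠ 0 → -x ∉ F) (hne : F.Nonempty) :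
    ∃ f : (Fin n → ℝ) →L[ℝ] ℝ, ∃ c : ℝ, 0 < c ∧ ∀ x ∈ F, c * ‖x‖ ≤ f x := by
  classical
  set e : EuclideanSpace ℝ (Fin n) ≃L[ℝ] (Fin n → ℝ) := EuclideanSpace.equiv (Fin n) ℝ with he
  set F' : Set (EuclideanSpace ℝ (Fin n)) := ⇑e ⁻¹' F with hF'
  have hmem : ∀ x' : EuclideanSpace ℝ (Fin n), x' ∈ F' ↔ e x' ∈ F := fun _ => Iff.rfl
  obtain ⟨y, c0, hc0, hy⟩ := aux_pos_functional F'
    (hclosed.preimage e.continuous)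
    (hconv.linear_preimage (e : EuclideanSpace ℝ (Fin n) →ₗ[ℝ] (Fin n → ℝ)))
    (by
      intro c hc x hx
      rw [hmem, map_smul]
      exact hcone c hc _ hx)
    (by
      intro x hx hx0 hnx
      rw [hmem, map_neg] at hnx
      refine hsal (e x) hx (fun h => hx0 ?_) hnx
      have := congrArg e.symm h
      simpa using this)
    (by
      obtain ⟨x, hx⟩ := hne
      exact ⟨e.symm x, by simp [hmem, hx]⟩)
  set f : (Fin n → ℝ) →L[ℝ] ℝ := (innerSL ℝ y).comp (e.symm : (Fin n → ℝ) →L[ℝ] EuclideanSpace ℝ (Fin n)) with hf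
  set C : ℝ := ‖(e : EuclideanSpace ℝ (Fin n) →L[ℝ] (Fin n → ℝ))‖ with hC
  have hCpos : (0:ℝ) < C + 1 := by positivity
  refine ⟨f, c0 / (C + 1), by positivity, ?_⟩
  intro x hx
  have hx' : e.symm x ∈ F' := by rw [hmem]; simp [hx]
  have h1 := hy _ hx'
  have h2 : ‖x‖ ≤ (C + 1) * ‖e.symm x‖ := by
    have := (e : EuclideanSpace ℝ (Fin n) →L[ℝ] (Fin n → ℝ)).le_opNorm (e.symm x)
    simp only [ContinuousLinearMap.coe_coe, ContinuousLinearEquiv.coe_coe] at this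
    rw [e.apply_symm_apply] at this
    nlinarith [norm_nonneg (e.symm x)]
  have h3 : f x = ⟪e.symm x, y⟫ := by
    simp only [hf, ContinuousLinearMap.comp_apply, innerSL_apply_apply, ContinuousLinearEquiv.coe_coe]
    exact real_inner_comm _ _
  rw [h3]
  calc c0 / (C + 1) * ‖x‖ ≤ c0 / (C + 1) * ((C + 1) * ‖e.symm x‖) := by
        apply mul_le_mul_of_nonneg_left h2 (by positivity)
    _ = c0 * ‖e.symm x‖ := by field_simp
    _ ≤ ⟪e.symm x, y⟫ := h1

set_option maxHeartbeats 1000000 in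
/-- There always exists an extreme ray in the preimage of an extreme ray:
if `Q ⊆ ℝ^m` is a closed convex cone without straight lines, `L` is linear and
`L(Q)` is a closed cone without straight lines, then every extreme ray `V` of
`L(Q)` is the image of some extreme ray `W` of `Q`. -/
theorem extreme_ray_preimage (m k : ℕ) (Q : Set (Fin m → ℝ))
    (hQclosed : IsClosed Q) (hQconvex : Convex ℝ Q)
    (hQcone : ∀ c : ℝ, 0 ≤ c → ∀ x ∈ Q, c • x ∈ Q)
    (hQsalient : ∀ x ∈ Q, x ≠ 0 → -x ∉ Q)
    (L : (Fin m → ℝ) →ₗ[ℝ] (Fin k → ℝ))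
    (hLQclosed : IsClosed (L '' Q))
    (hLQsalient : ∀ x ∈ L '' Q, x ≠ 0 → -x ∉ L '' Q)
    (v : Fin k → ℝ) (hv : IsExtremeRayDir (L '' Q) v) :
    ∃ w : Fin m → ℝ, IsExtremeRayDir Q w ∧ L w = v := by
  classical
  obtain ⟨hv0, ⟨u0, hu0Q, hLu0⟩, hvext⟩ := hv
  have hLcont : Continuous L := L.continuous_of_finiteDimensional
  -- the functional φ on the target space
  set φ : (Fin k → ℝ) →ₗ[ℝ] ℝ := ∑ i : Fin k, v i • (LinearMap.proj i) with hφ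
  have hφapp : ∀ y : Fin k → ℝ, φ y = ∑ i : Fin k, v i * y i := by
    intro y
    simp [hφ, LinearMap.sum_apply, LinearMap.smul_apply, LinearMap.proj_apply, smul_eq_mul]
  have hφcont : Continuous φ := φ.continuous_of_finiteDimensional
  set σ : ℝ := φ v with hσ
  have hσpos : 0 < σ := by
    rw [hσ, hφapp]
    obtain ⟨i, hi⟩ := Function.ne_iff.mp hv0
    refine Finset.sum_pos' (fun j _ => mul_self_nonneg _) ⟨i, Finset.mem_univ i, ?_⟩
    exact mul_self_pos.mpr (by simpa using hi)
  -- the face cone F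
  set F : Set (Fin m → ℝ) := {x | x ∈ Q ∧ ∃ c : ℝ, 0 ≤ c ∧ L x = c • v} with hF
  have hFsubQ : F ⊆ Q := fun x hx => hx.1
  have hFalt : F = (Q ∩ (fun x => φ (L x)) ⁻¹' (Set.Ici 0)) ∩
      ((fun x => σ • (L x) - φ (L x) • v) ⁻¹' {0}) := by
    ext x
    constructor
    · rintro ⟨hxQ, c, hc, hLx⟩
      refine ⟨⟨hxQ, ?_⟩, ?_⟩
      · simp only [Set.mem_preimage, Set.mem_Ici, hLx, map_smul, smul_eq_mul]
        exact mul_nonneg hc hσpos.le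
      · simp only [Set.mem_preimage, Set.mem_singleton_iff, hLx, map_smul, smul_eq_mul,
          smul_smul]
        rw [mul_comm, sub_self]
    · rintro ⟨⟨hxQ, h1⟩, h2⟩
      simp only [Set.mem_preimage, Set.mem_Ici] at h1
      simp only [Set.mem_preimage, Set.mem_singleton_iff, sub_eq_zero] at h2
      refine ⟨hxQ, φ (L x) / σ, div_nonneg h1 hσpos.le, ?_⟩
      have := congrArg (fun z => σ⁻¹ • z) h2
      simp only [smul_smul, inv_mul_cancel₀ hσpos.ne', one_smul] at this
      nth_rewrite 1 [this]
      rw [div_eq_inv_mul]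
  have hFclosed : IsClosed F := by
    rw [hFalt]
    refine (hQclosed.inter ?_).inter ?_
    · exact IsClosed.preimage (hφcont.comp hLcont) isClosed_Ici
    · exact IsClosed.preimage ((hLcont.const_smul σ).sub (((hφcont.comp hLcont)).smul continuous_const)) isClosed_singleton
  have hFconvex : Convex ℝ F := by
    intro x hx y hy a b ha hb hab
    obtain ⟨hxQ, cx, hcx, hLx⟩ := hx
    obtain ⟨hyQ, cy, hcy, hLy⟩ := hy
    refine ⟨hQconvex hxQ hyQ ha hb hab, a * cx + b * cy, by positivity, ?_⟩
    rw [map_add, map_smul, map_smul, hLx, hLy, smul_smul, smul_smul, add_smul]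
  have hFcone : ∀ c : ℝ, 0 ≤ c → ∀ x ∈ F, c • x ∈ F := by
    rintro c hc x ⟨hxQ, cx, hcx, hLx⟩
    exact ⟨hQcone c hc x hxQ, c * cx, mul_nonneg hc hcx, by rw [map_smul, hLx, smul_smul]⟩
  have hFsal : ∀ x ∈ F, x ≠ 0 → -x ∉ F := fun x hx hx0 hnx => hQsalient x (hFsubQ hx) hx0 (hFsubQ hnx)
  have hu0F : u0 ∈ F := ⟨hu0Q, 1, zero_le_one, by rw [hLu0, one_smul]⟩
  have hu00 : u0 ≠ 0 := by
    intro h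
    rw [h, map_zero] at hLu0
    exact hv0 hLu0.symm
  obtain ⟨f, c0, hc0, hflb⟩ := aux_pos_functional' F hFclosed hFconvex hFcone hFsal ⟨u0, hu0F⟩
  -- the compact base B
  set B : Set (Fin m → ℝ) := {x | x ∈ F ∧ f x = 1} with hB
  have hBconv : Convex ℝ B := by
    intro x hx y hy a b ha hb hab
    refine ⟨hFconvex hx.1 hy.1 ha hb hab, ?_⟩
    rw [map_add, map_smul, map_smul, smul_eq_mul, smul_eq_mul, hx.2, hy.2, mul_one, mul_one, hab]
  have hBclosed : IsClosed B := by
    have : B = F ∩ (⇑f ⁻¹' {1}) := rfl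
    rw [this]
    exact hFclosed.inter (IsClosed.preimage f.continuous isClosed_singleton)
  have hBcomp : IsCompact B := by
    refine (isCompact_closedBall (0 : Fin m → ℝ) c0⁻¹).of_isClosed_subset hBclosed ?_
    rintro x ⟨hxF, hfx⟩
    rw [Metric.mem_closedBall, dist_zero_right]
    have := hflb x hxF
    rw [hfx] at this
    rw [← inv_mul_cancel₀ hc0.ne'] at this
    calc ‖x‖ = c0⁻¹ * (c0 * ‖x‖) := by field_simp
      _ ≤ c0⁻¹ * (c0⁻¹ * c0) := by
          apply mul_le_mul_of_nonneg_left (by linarith) (by positivity)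
      _ = c0⁻¹ := by field_simp
  have hfu0 : 0 < f u0 := by
    have h1 : (0:ℝ) < c0 * ‖u0‖ := by
      have := norm_pos_iff.mpr hu00
      positivity
    exact lt_of_lt_of_le h1 (hflb u0 hu0F)
  set xb : Fin m → ℝ := (f u0)⁻¹ • u0 with hxb
  have hxbB : xb ∈ B := by
    refine ⟨hFcone _ (by positivity) u0 hu0F, ?_⟩
    rw [hxb, map_smul, smul_eq_mul, inv_mul_cancel₀ hfu0.ne']
  -- existence of extreme point of B with positive φ∘L
  have hEP : ∃ p ∈ Set.extremePoints ℝ B, 0 < φ (L p) := by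
    by_contra hcon
    push_neg at hcon
    set T : Set (Fin m → ℝ) := {x | φ (L x) ≤ 0} with hT
    have hTconv : Convex ℝ T := convex_halfSpace_le (φ.comp L).isLinear 0
    have hTclosed : IsClosed T := isClosed_le (hφcont.comp hLcont) continuous_const
    have hBsubT : B ⊆ T := by
      rw [← closure_convexHull_extremePoints hBcomp hBconv]
      exact closure_minimal (convexHull_min (fun p hp => hcon p hp) hTconv) hTclosed
    have h1 := hBsubT hxbB
    have h2 : φ (L xb) = (f u0)⁻¹ * σ := by
      rw [hxb, map_smul, map_smul, hLu0, smul_eq_mul, hσ]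
    rw [hT] at h1
    simp only [Set.mem_setOf_eq] at h1
    rw [h2] at h1
    have : (0:ℝ) < (f u0)⁻¹ * σ := by positivity
    linarith
  obtain ⟨p, hpEP, hpφ⟩ := hEP
  obtain ⟨hpB, hpEP2⟩ := mem_extremePoints.mp hpEP
  obtain ⟨⟨hpQ, cp, hcp0, hLp⟩, hfp⟩ := hpB
  have hcp : 0 < cp := by
    rw [hLp, map_smul, smul_eq_mul, ← hσ] at hpφ
    nlinarith
  have hp0 : p ≠ 0 := by
    intro h
    rw [h, map_zero] at hfp
    norm_num at hfp
  -- p generates an extreme ray of Q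
  have hpext : IsExtremeRayDir Q p := by
    refine ⟨hp0, hpQ, ?_⟩
    intro lam hlam x hxQ y hyQ hmid
    have hsum : x + y = (2 * lam) • p := by
      have h2 : ((2:ℝ) * (1/2:ℝ)) • (x + y) = (2 * lam) • p := by
        rw [← smul_smul, ← hmid, smul_smul]
      norm_num at h2
      exact h2
    have hLmid : (lam * cp) • v = (1 / 2 : ℝ) • (L x + L y) := by
      have := congrArg L hmid
      rw [map_smul, map_smul, map_add, hLp, smul_smul] at this
      exact this
    obtain ⟨⟨a, ha0, hLxa⟩, ⟨b, hb0, hLyb⟩⟩ :=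
      hvext (lam * cp) (by positivity) (L x) ⟨x, hxQ, rfl⟩ (L y) ⟨y, hyQ, rfl⟩ hLmid
    have hxF : x ∈ F := ⟨hxQ, a, ha0, hLxa⟩
    have hyF : y ∈ F := ⟨hyQ, b, hb0, hLyb⟩
    by_cases hx0 : x = 0
    · subst hx0
      refine ⟨⟨0, le_rfl, by rw [zero_smul]⟩, ⟨2 * lam, by positivity, ?_⟩⟩
      rw [← hsum, zero_add]
    · by_cases hy0 : y = 0
      · subst hy0
        refine ⟨⟨2 * lam, by positivity, ?_⟩, ⟨0, le_rfl, by rw [zero_smul]⟩⟩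
        rw [← hsum, add_zero]
      · have hfx : 0 < f x := by
          have h1 : (0:ℝ) < c0 * ‖x‖ := by
            have := norm_pos_iff.mpr hx0
            positivity
          exact lt_of_lt_of_le h1 (hflb x hxF)
        have hfy : 0 < f y := by
          have h1 : (0:ℝ) < c0 * ‖y‖ := by
            have := norm_pos_iff.mpr hy0
            positivity
          exact lt_of_lt_of_le h1 (hflb y hyF)
        have hlam2 : 2 * lam = f x + f y := by
          have := congrArg f hsum
          rw [map_add, map_smul, smul_eq_mul, hfp, mul_one] at this
          linarith
        have hlampos : 0 < lam := by linarith
        set x' : Fin m → ℝ := (f x)⁻¹ • x with hx'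
        set y' : Fin m → ℝ := (f y)⁻¹ • y with hy'
        have hx'B : x' ∈ B := by
          refine ⟨hFcone _ (by positivity) x hxF, ?_⟩
          rw [hx', map_smul, smul_eq_mul, inv_mul_cancel₀ hfx.ne']
        have hy'B : y' ∈ B := by
          refine ⟨hFcone _ (by positivity) y hyF, ?_⟩
          rw [hy', map_smul, smul_eq_mul, inv_mul_cancel₀ hfy.ne']
        have hopen : p ∈ openSegment ℝ x' y' := by
          refine ⟨f x / (2 * lam), f y / (2 * lam), by positivity, by positivity, ?_, ?_⟩
          · rw [← add_div, hlam2, div_self (by positivity)]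
          · rw [hx', hy', smul_smul, smul_smul]
            have e1 : f x / (2 * lam) * (f x)⁻¹ = (2 * lam)⁻¹ := by
              field_simp
            have e2 : f y / (2 * lam) * (f y)⁻¹ = (2 * lam)⁻¹ := by
              field_simp
            rw [e1, e2, ← smul_add, hsum, smul_smul, inv_mul_cancel₀ (by positivity : (2*lam) ≠ 0), one_smul]
        obtain ⟨hx'p, hy'p⟩ := hpEP2 x' hx'B y' hy'B hopen
        constructor
        · refine ⟨f x, hfx.le, ?_⟩
          rw [← hx'p, hx', smul_smul, mul_inv_cancel₀ hfx.ne', one_smul]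
        · refine ⟨f y, hfy.le, ?_⟩
          rw [← hy'p, hy', smul_smul, mul_inv_cancel₀ hfy.ne', one_smul]
  -- rescale
  refine ⟨cp⁻¹ • p, ⟨?_, hQcone cp⁻¹ (by positivity) p hpQ, ?_⟩, ?_⟩
  · exact smul_ne_zero (inv_ne_zero hcp.ne') hp0
  · intro lam hlam x hxQ y hyQ hmid
    rw [smul_smul] at hmid
    obtain ⟨⟨a, ha0, hxa⟩, ⟨b, hb0, hyb⟩⟩ :=
      hpext.2.2 (lam * cp⁻¹) (by positivity) x hxQ y hyQ hmid
    constructor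
    · refine ⟨a * cp, by positivity, ?_⟩
      rw [hxa, smul_smul, mul_assoc, mul_inv_cancel₀ hcp.ne', mul_one]
    · refine ⟨b * cp, by positivity, ?_⟩
      rw [hyb, smul_smul, mul_assoc, mul_inv_cancel₀ hcp.ne', mul_one]
  · rw [map_smul, hLp, smul_smul, inv_mul_cancel₀ hcp.ne', one_smul]
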